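/- For any subset Y ⊆ ℝ^n, conv^n(Y) = conv(Y); i.e., the Brunn number of any subset of ℝ^n is at most n. -/

import Mathlib

open Set

/-- The union of all line segments with endpoints in `A`. -/
def segJoin {E : Type*} [AddCommGroup E] [Module ℝ E] (A : Set E) : Set E :=
  ⋃ a ∈ A, ⋃ b ∈ A, segment ℝ a b

/-- The iterated segment-join `convⁱ(A)`. -/
def segJoinIter {E : Type*} [AddCommGroup E] [Module ℝ E] : ℕ → Set E → Set E
  | 0, A => A
  | (i+1), A => segJoin (segJoinIter i A)

section aux

variable {E : Type*} [AddCommGroup E] [Module ℝ E]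

lemma segJoin_eq_convexJoin (A : Set E) : segJoin A = convexJoin ℝ A A := rfl

lemma subset_segJoin (A : Set E) : A ⊆ segJoin A := fun x hx =>
  mem_iUnion.2 ⟨x, mem_iUnion.2 ⟨hx, mem_iUnion.2 ⟨x, mem_iUnion.2 ⟨hx, left_mem_segment _ _ _⟩⟩⟩⟩

lemma segJoin_mono {A B : Set E} (h : A ⊆ B) : segJoin A ⊆ segJoin B := by
  rw [segJoin_eq_convexJoin, segJoin_eq_convexJoin]; exact convexJoin_mono h h

lemma segJoinIter_mono {A B : Set E} (h : A ⊆ B) (m : ℕ) :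
    segJoinIter m A ⊆ segJoinIter m B := by
  induction m with
  | zero => exact h
  | succ m ih => exact segJoin_mono ih

lemma subset_segJoinIter (A : Set E) (m : ℕ) : A ⊆ segJoinIter m A := by
  induction m with
  | zero => exact Subset.rfl
  | succ m ih => exact ih.trans ((subset_segJoin _).trans (segJoin_mono Subset.rfl))

lemma segJoinIter_subset_convexHull (A : Set E) (m : ℕ) :
    segJoinIter m A ⊆ convexHull ℝ A := by
  induction m with
  | zero => exact subset_convexHull ℝ A
  | succ m ih =>
    refine (segJoin_mono ih).trans ?_
    rw [segJoin_eq_convexJoin]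
    refine (convexJoin_subset_convexHull _ _).trans ?_
    rw [Set.union_self, (convex_convexHull ℝ A).convexHull_eq]

/-- Key lemma: a convex hull of at most `2^m` points is covered by `m` segment joins. -/
lemma convexHull_finset_subset_segJoinIter :
    ∀ (m : ℕ) (t : Finset E), t.card ≤ 2 ^ m →
      (convexHull ℝ (t : Set E)) ⊆ segJoinIter m (t : Set E) := by
  intro m
  induction m with
  | zero =>
    intro t ht
    rcases t.eq_empty_or_nonempty with rfl | hne
    · simp
    · have h1 : t.card = 1 := le_antisymm (by simpa using ht) (Finset.one_le_card.2 hne)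
      obtain ⟨a, rfl⟩ := Finset.card_eq_one.1 h1
      simp [segJoinIter, convexHull_singleton]
  | succ m ih =>
    intro t ht
    classical
    rcases t.eq_empty_or_nonempty with rfl | hne
    · simp
    by_cases hc : t.card ≤ 2 ^ m
    · exact (ih t hc).trans (subset_segJoin _)
    push_neg at hc
    obtain ⟨t1, ht1sub, ht1card⟩ := Finset.exists_subset_card_eq hc.le
    set t2 := t \ t1 with ht2def
    have ht2card : t2.card = t.card - 2 ^ m := by
      rw [ht2def, Finset.card_sdiff_of_subset ht1sub, ht1card]
    have ht1ne : t1.Nonempty := Finset.card_pos.1 (by rw [ht1card]; positivity)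
    have ht2ne : t2.Nonempty := Finset.card_pos.1 (by omega)
    have hunion : t1 ∪ t2 = t := Finset.union_sdiff_of_subset ht1sub
    have h2le : t2.card ≤ 2 ^ m := by
      have : t.card ≤ 2 ^ (m + 1) := ht
      rw [pow_succ] at this
      omega
    calc (convexHull ℝ (t : Set E))
        = convexHull ℝ ((t1 : Set E) ∪ (t2 : Set E)) := by
          rw [← Finset.coe_union, hunion]
      _ = convexJoin ℝ (convexHull ℝ (t1 : Set E)) (convexHull ℝ (t2 : Set E)) :=
          convexHull_union (by exact_mod_cast ht1ne) (by exact_mod_cast ht2ne)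
      _ ⊆ convexJoin ℝ (segJoinIter m (t : Set E)) (segJoinIter m (t : Set E)) := by
          refine convexJoin_mono ?_ ?_
          · exact ((ih t1 (by omega)).trans
              (segJoinIter_mono (by exact_mod_cast ht1sub) m))
          · exact ((ih t2 h2le).trans
              (segJoinIter_mono (by exact_mod_cast (Finset.sdiff_subset : t2 ⊆ t)) m))
      _ = segJoinIter (m + 1) (t : Set E) := rfl

end aux

/-- Corollary `BrunnRn`. For any subset `Y ⊆ ℝⁿ`, `convⁿ(Y) = conv(Y)`;
i.e. the Brunn number of any subset of `ℝⁿ` is at most `n`. -/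
theorem segJoinIter_eq_convexHull (n : ℕ) (Y : Set (EuclideanSpace ℝ (Fin n))) :
    segJoinIter n Y = convexHull ℝ Y := by
  refine Subset.antisymm (segJoinIter_subset_convexHull Y n) ?_
  rw [convexHull_eq_union]
  refine iUnion_subset fun t => iUnion_subset fun hts => iUnion_subset fun hai => ?_
  have hcard : t.card ≤ n + 1 := by
    have := hai.card_le_finrank_succ
    simp only [Fintype.card_coe] at this
    refine this.trans ?_
    have h1 : Module.finrank ℝ (vectorSpan ℝ (Set.range ((↑) : t → EuclideanSpace ℝ (Fin n))))
        ≤ Module.finrank ℝ (EuclideanSpace ℝ (Fin n)) := Submodule.finrank_le _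
    rw [finrank_euclideanSpace_fin] at h1
    omega
  have h2 : t.card ≤ 2 ^ n := hcard.trans (Nat.lt_two_pow_self (n := n))
  exact (convexHull_finset_subset_segJoinIter n t h2).trans
    (segJoinIter_mono hts n)
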